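/- Let A, B be symmetric matrices with U = B − A positive definite, f B-semi-concave and g (−A)-semi-convex on ℝⁿ with f ≥ g, K = argmin(f−g), and Ĩ = {(x, df(x)) : x ∈ K} ⊂ ℝⁿ × ℝⁿ. Then for every z ∈ Ĩ, the paratingent cone 𝒫_z(Ĩ) — the set of all limits lim tₙ(zₙ − wₙ) with tₙ > 0, zₙ, wₙ ∈ Ĩ, zₙ, wₙ → z — is contained in the cone C(𝒮_A, 𝒮_B) = {(h, Sh) : S symmetric, A ≤ S ≤ B, h ∈ ℝⁿ}. -/

import Mathlib

open Matrix Filter Topology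

/-- The gradient vector of f : ℝⁿ → ℝ at x, as a vector in ℝⁿ. -/
noncomputable def gradVec {n : ℕ} (f : (Fin n → ℝ) → ℝ) (x : Fin n → ℝ) :
    Fin n → ℝ :=
  fun i => fderiv ℝ f x (Pi.single i 1)

/-- The cone C(𝒮_A, 𝒮_B) between the graph Lagrangians of A ≤ B. -/
def coneBetween {n : ℕ} (S₁ S₂ : Matrix (Fin n) (Fin n) ℝ) :
    Set ((Fin n → ℝ) × (Fin n → ℝ)) :=
  {v | ∃ S : Matrix (Fin n) (Fin n) ℝ, S.IsSymm ∧ (S - S₁).PosSemidef ∧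
    (S₂ - S).PosSemidef ∧ v.2 = S *ᵥ v.1}

/-- The paratingent cone of a set S at z: all limits of tₙ(zₙ − wₙ) with
tₙ > 0, zₙ, wₙ ∈ S, zₙ, wₙ → z. -/
def paratingent {E : Type*} [NormedAddCommGroup E] [NormedSpace ℝ E]
    (S : Set E) (z : E) : Set E :=
  {v | ∃ (t : ℕ → ℝ) (zs ws : ℕ → E),
    (∀ m, 0 < t m ∧ zs m ∈ S ∧ ws m ∈ S) ∧
    Tendsto zs atTop (𝓝 z) ∧ Tendsto ws atTop (𝓝 z) ∧
    Tendsto (fun m => t m • (zs m - ws m)) atTop (𝓝 v)}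

namespace Stmt19Aux

variable {n : ℕ}

lemma dot_self_nonneg (v : Fin n → ℝ) : 0 ≤ v ⬝ᵥ v := by
  simp only [dotProduct]; exact Finset.sum_nonneg fun i _ => mul_self_nonneg _

lemma symm_swap {M : Matrix (Fin n) (Fin n) ℝ} (hM : M.IsSymm) (a b : Fin n → ℝ) :
    (M *ᵥ a) ⬝ᵥ b = (M *ᵥ b) ⬝ᵥ a := by
  conv_rhs => rw [← hM.eq, mulVec_transpose, ← dotProduct_mulVec, dotProduct_comm]

lemma quad_smul (M : Matrix (Fin n) (Fin n) ℝ) (v : Fin n → ℝ) (c : ℝ) :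
    (M *ᵥ (c • v)) ⬝ᵥ (c • v) = c^2 * ((M *ᵥ v) ⬝ᵥ v) := by
  rw [mulVec_smul, smul_dotProduct, dotProduct_smul]; simp [smul_eq_mul]; ring

lemma quad_bound (M : Matrix (Fin n) (Fin n) ℝ) (w : Fin n → ℝ) :
    |(M *ᵥ w) ⬝ᵥ w| ≤ (∑ i, ∑ j, |M i j|) * (‖w‖ * ‖w‖) := by
  simp only [dotProduct, mulVec]
  calc |∑ i, (∑ j, M i j * w j) * w i| ≤ ∑ i, |(∑ j, M i j * w j) * w i| :=
        Finset.abs_sum_le_sum_abs _ _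
    _ ≤ ∑ i, (∑ j, |M i j|) * (‖w‖ * ‖w‖) := by
        refine Finset.sum_le_sum fun i _ => ?_
        rw [abs_mul]
        have h1 : |∑ j, M i j * w j| ≤ (∑ j, |M i j|) * ‖w‖ := by
          calc |∑ j, M i j * w j| ≤ ∑ j, |M i j * w j| := Finset.abs_sum_le_sum_abs _ _
            _ ≤ ∑ j, |M i j| * ‖w‖ := by
                refine Finset.sum_le_sum fun j _ => ?_
                rw [abs_mul]
                exact mul_le_mul_of_nonneg_left
                  (by simpa [Real.norm_eq_abs] using norm_le_pi_norm w j) (abs_nonneg _)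
            _ = (∑ j, |M i j|) * ‖w‖ := by rw [Finset.sum_mul]
        have h2 : |w i| ≤ ‖w‖ := by simpa [Real.norm_eq_abs] using norm_le_pi_norm w i
        calc |∑ j, M i j * w j| * |w i| ≤ ((∑ j, |M i j|) * ‖w‖) * ‖w‖ :=
              mul_le_mul h1 h2 (abs_nonneg _)
                (mul_nonneg (Finset.sum_nonneg fun j _ => abs_nonneg _) (norm_nonneg _))
          _ = (∑ j, |M i j|) * (‖w‖ * ‖w‖) := by ring
    _ = (∑ i, ∑ j, |M i j|) * (‖w‖ * ‖w‖) := by rw [Finset.sum_mul]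

lemma dot_tendsto {a b : ℕ → Fin n → ℝ} {a₀ b₀ : Fin n → ℝ}
    (ha : Tendsto a atTop (𝓝 a₀)) (hb : Tendsto b atTop (𝓝 b₀)) :
    Tendsto (fun m => a m ⬝ᵥ b m) atTop (𝓝 (a₀ ⬝ᵥ b₀)) := by
  simp only [dotProduct]
  exact tendsto_finset_sum _ fun i _ =>
    (tendsto_pi_nhds.1 ha i).mul (tendsto_pi_nhds.1 hb i)

lemma mulVec_tendsto (M : Matrix (Fin n) (Fin n) ℝ) {a : ℕ → Fin n → ℝ} {a₀ : Fin n → ℝ}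
    (ha : Tendsto a atTop (𝓝 a₀)) :
    Tendsto (fun m => M *ᵥ a m) atTop (𝓝 (M *ᵥ a₀)) := by
  rw [tendsto_pi_nhds]
  intro i
  exact dot_tendsto tendsto_const_nhds ha

/-- key pointwise two-sided expansion at a minimizer -/
lemma lemma1 (A B : Matrix (Fin n) (Fin n) ℝ) (hU : (B - A).PosSemidef)
    (f g : (Fin n → ℝ) → ℝ)
    (hf : ∀ x : Fin n → ℝ, ∃ l : Fin n → ℝ, ∀ y : Fin n → ℝ,
      f y - f x - l ⬝ᵥ (y - x) ≤ (1/2) * (B *ᵥ (y - x)) ⬝ᵥ (y - x))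
    (hg : ∀ x : Fin n → ℝ, ∃ l : Fin n → ℝ, ∀ y : Fin n → ℝ,
      (-g) y - (-g) x - l ⬝ᵥ (y - x) ≤ (1/2) * ((-A) *ᵥ (y - x)) ⬝ᵥ (y - x))
    (x : Fin n → ℝ) (hx : ∀ y, f x - g x ≤ f y - g y) :
    ∀ w, (1/2) * ((A *ᵥ w) ⬝ᵥ w) ≤ f (x + w) - f x - gradVec f x ⬝ᵥ w ∧
      f (x + w) - f x - gradVec f x ⬝ᵥ w ≤ (1/2) * ((B *ᵥ w) ⬝ᵥ w) := by
  obtain ⟨lf, hlf⟩ := hf x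
  obtain ⟨l, hl⟩ := hg x
  have hup : ∀ w, f (x + w) - f x - lf ⬝ᵥ w ≤ (1/2) * ((B *ᵥ w) ⬝ᵥ w) := by
    intro w; simpa using hlf (x + w)
  have hlo : ∀ w, (1/2) * ((A *ᵥ w) ⬝ᵥ w) ≤ f (x + w) - f x - (-l) ⬝ᵥ w := by
    intro w
    have h1 := hl (x + w)
    simp only [add_sub_cancel_left, Pi.neg_apply, neg_mulVec, neg_dotProduct] at h1
    have h2 := hx (x + w)
    have h3 : (-l) ⬝ᵥ w = -(l ⬝ᵥ w) := neg_dotProduct l w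
    linarith
  have key : ∀ w, (-l - lf) ⬝ᵥ w ≤ (1/2) * (((B - A) *ᵥ w) ⬝ᵥ w) := by
    intro w
    have h1 := hlo w
    have h2 := hup w
    rw [sub_dotProduct] 
    rw [sub_mulVec, sub_dotProduct]
    linarith
  have hΔ : -l = lf := by
    set Δ := -l - lf with hΔdef
    have hc0 : Δ ⬝ᵥ Δ ≤ 0 := by
      by_contra hcon
      push_neg at hcon
      set c := Δ ⬝ᵥ Δ with hc
      set q := ((B - A) *ᵥ Δ) ⬝ᵥ Δ with hqd
      have hq : 0 ≤ q := by
        have := hU.dotProduct_mulVec_nonneg Δ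
        simpa [star_trivial, dotProduct_comm, hqd] using this
      have hq1 : (0:ℝ) < q + 1 := by linarith
      have ht : (0:ℝ) < c / (q + 1) := div_pos hcon hq1
      have hkey := key ((c / (q + 1)) • Δ)
      rw [dotProduct_smul, quad_smul, smul_eq_mul] at hkey
      set t := c / (q + 1) with htd
      have htq : t * (q + 1) = c := div_mul_cancel₀ c (ne_of_gt hq1)
      nlinarith [hkey, htq, mul_pos ht ht, mul_nonneg (le_of_lt ht) hq, sq_nonneg t]
    have : Δ = 0 := dotProduct_self_eq_zero.mp (le_antisymm hc0 (dot_self_nonneg Δ))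
    have := sub_eq_zero.mp this
    exact this
  rw [hΔ] at hlo
  -- differentiability
  set p := lf with hp
  obtain ⟨Ca, hCa, hCa0⟩ : ∃ C : ℝ, (∀ w, |(A *ᵥ w) ⬝ᵥ w| ≤ C * (‖w‖ * ‖w‖)) ∧ 0 ≤ C :=
    ⟨_, quad_bound A, Finset.sum_nonneg fun i _ => Finset.sum_nonneg fun j _ => abs_nonneg _⟩
  obtain ⟨Cb, hCb, hCb0⟩ : ∃ C : ℝ, (∀ w, |(B *ᵥ w) ⬝ᵥ w| ≤ C * (‖w‖ * ‖w‖)) ∧ 0 ≤ C :=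
    ⟨_, quad_bound B, Finset.sum_nonneg fun i _ => Finset.sum_nonneg fun j _ => abs_nonneg _⟩
  obtain ⟨Cq, hCq0, habs⟩ : ∃ C : ℝ, 0 < C ∧
      ∀ w, |f (x + w) - f x - p ⬝ᵥ w| ≤ C * (‖w‖ * ‖w‖) := by
    refine ⟨(1/2) * Ca + (1/2) * Cb + 1, by linarith, fun w => ?_⟩
    have h1 := hlo w
    have h2 := hup w
    obtain ⟨h3a, h3b⟩ := abs_le.mp (hCa w)
    obtain ⟨h4a, h4b⟩ := abs_le.mp (hCb w)
    have h5 : (0:ℝ) ≤ ‖w‖ * ‖w‖ := mul_nonneg (norm_nonneg _) (norm_nonneg _)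
    have hexp : ((1/2) * Ca + (1/2) * Cb + 1) * (‖w‖ * ‖w‖) =
        (1/2) * (Ca * (‖w‖ * ‖w‖)) + (1/2) * (Cb * (‖w‖ * ‖w‖)) + ‖w‖ * ‖w‖ := by ring
    rw [abs_le]
    constructor
    · linarith [mul_nonneg hCa0 h5, mul_nonneg hCb0 h5]
    · linarith [mul_nonneg hCa0 h5, mul_nonneg hCb0 h5]
  set L : (Fin n → ℝ) →L[ℝ] ℝ :=
    LinearMap.toContinuousLinearMap
      { toFun := fun w => p ⬝ᵥ w
        map_add' := fun a b => dotProduct_add p a b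
        map_smul' := fun c a => by simp [dotProduct_smul, smul_eq_mul] } with hL
  have hLap : ∀ w, L w = p ⬝ᵥ w := fun w => rfl
  have hderiv : HasFDerivAt f L x := by
    rw [hasFDerivAt_iff_isLittleO_nhds_zero]
    rw [Asymptotics.isLittleO_iff]
    intro c hc
    rw [Metric.eventually_nhds_iff]
    refine ⟨c / Cq, div_pos hc hCq0, fun {w} hw => ?_⟩
    rw [dist_zero_right] at hw
    rw [hLap, Real.norm_eq_abs]
    calc |f (x + w) - f x - p ⬝ᵥ w| ≤ Cq * (‖w‖ * ‖w‖) := habs w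
      _ ≤ Cq * ((c / Cq) * ‖w‖) := by
          apply mul_le_mul_of_nonneg_left _ (le_of_lt hCq0)
          exact mul_le_mul (le_of_lt hw) le_rfl (norm_nonneg _)
            (le_of_lt (div_pos hc hCq0))
      _ = c * ‖w‖ := by field_simp
  have hgrad : gradVec f x = p := by
    funext i
    have : fderiv ℝ f x = L := hderiv.fderiv
    rw [gradVec, this, hLap]
    simp [dotProduct_single]
  intro w
  rw [hgrad]
  exact ⟨hlo w, hup w⟩


lemma isHermitian_of_isSymm {M : Matrix (Fin n) (Fin n) ℝ} (h : M.IsSymm) :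
    M.IsHermitian := by
  show Mᴴ = M
  rw [conjTranspose_eq_transpose_of_trivial]
  exact h.eq

lemma vecMulVec_symm (r : Fin n → ℝ) : (vecMulVec r r).IsSymm :=
  Matrix.IsSymm.ext fun i j => by simp [vecMulVec_apply, mul_comm]

lemma vecMulVec_mulVec' (r w : Fin n → ℝ) :
    (vecMulVec r r) *ᵥ w = (r ⬝ᵥ w) • r := by
  funext i
  simp only [mulVec, dotProduct, vecMulVec_apply, Pi.smul_apply, smul_eq_mul]
  rw [Finset.sum_mul]
  exact Finset.sum_congr rfl fun j _ => by ring

/-- two-point inequality, specialized form -/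
lemma lemma2 (A B : Matrix (Fin n) (Fin n) ℝ) (f : (Fin n → ℝ) → ℝ)
    (x y p q : Fin n → ℝ)
    (hx : ∀ w, (1/2) * ((A *ᵥ w) ⬝ᵥ w) ≤ f (x + w) - f x - p ⬝ᵥ w ∧
      f (x + w) - f x - p ⬝ᵥ w ≤ (1/2) * ((B *ᵥ w) ⬝ᵥ w))
    (hy : ∀ w, (1/2) * ((A *ᵥ w) ⬝ᵥ w) ≤ f (y + w) - f y - q ⬝ᵥ w ∧
      f (y + w) - f y - q ⬝ᵥ w ≤ (1/2) * ((B *ᵥ w) ⬝ᵥ w)) :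
    ∀ s, (A *ᵥ s) ⬝ᵥ s + (p - q) ⬝ᵥ ((2:ℝ) • s + (x - y)) ≤
      (B *ᵥ (s + (x - y))) ⬝ᵥ (s + (x - y)) := by
  intro s
  have h1 := (hx s).1
  have h2 := (hy (-s)).1
  have h3 := (hx (-(s + (x - y)))).2
  have h4 := (hy (s + (x - y))).2
  rw [show y + -s = x + -(s + (x - y)) from by abel] at h2
  rw [show y + (s + (x - y)) = x + s from by abel] at h4
  simp only [mulVec_neg, dotProduct_neg, neg_dotProduct, neg_neg, dotProduct_add,
    sub_dotProduct, dotProduct_smul, smul_eq_mul, dotProduct_sub] at h1 h2 h3 h4 ⊢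
  linarith

/-- scaled two-point inequality -/
lemma lemma2t (A B : Matrix (Fin n) (Fin n) ℝ) (f : (Fin n → ℝ) → ℝ)
    (x y p q : Fin n → ℝ) (t : ℝ) (ht : t ≠ 0)
    (hx : ∀ w, (1/2) * ((A *ᵥ w) ⬝ᵥ w) ≤ f (x + w) - f x - p ⬝ᵥ w ∧
      f (x + w) - f x - p ⬝ᵥ w ≤ (1/2) * ((B *ᵥ w) ⬝ᵥ w))
    (hy : ∀ w, (1/2) * ((A *ᵥ w) ⬝ᵥ w) ≤ f (y + w) - f y - q ⬝ᵥ w ∧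
      f (y + w) - f y - q ⬝ᵥ w ≤ (1/2) * ((B *ᵥ w) ⬝ᵥ w)) :
    ∀ s, (A *ᵥ s) ⬝ᵥ s + (t • (p - q)) ⬝ᵥ ((2:ℝ) • s + t • (x - y)) ≤
      (B *ᵥ (s + t • (x - y))) ⬝ᵥ (s + t • (x - y)) := by
  intro s
  have h := lemma2 A B f x y p q hx hy (t⁻¹ • s)
  have hs : t • (t⁻¹ • s) = s := by rw [smul_smul, mul_inv_cancel₀ ht, one_smul]
  have e1 : (A *ᵥ s) ⬝ᵥ s = t^2 * ((A *ᵥ (t⁻¹ • s)) ⬝ᵥ (t⁻¹ • s)) := by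
    conv_lhs => rw [← hs, quad_smul]
  have e2 : t • (t⁻¹ • s + (x - y)) = s + t • (x - y) := by rw [smul_add, hs]
  have e3 : (B *ᵥ (s + t • (x - y))) ⬝ᵥ (s + t • (x - y)) =
      t^2 * ((B *ᵥ (t⁻¹ • s + (x - y))) ⬝ᵥ (t⁻¹ • s + (x - y))) := by
    rw [← e2, quad_smul]
  have e5 : (2:ℝ) • s + t • (x - y) = t • ((2:ℝ) • (t⁻¹ • s) + (x - y)) := by
    rw [smul_add, smul_comm t (2:ℝ), hs]
  have e4 : (t • (p - q)) ⬝ᵥ ((2:ℝ) • s + t • (x - y)) =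
      t^2 * ((p - q) ⬝ᵥ ((2:ℝ) • (t⁻¹ • s) + (x - y))) := by
    rw [e5, smul_dotProduct, dotProduct_smul, smul_eq_mul, smul_eq_mul]
    ring
  rw [e1, e3, e4]
  have hmul := mul_le_mul_of_nonneg_left h (sq_nonneg t)
  have hdist : t^2 * ((A *ᵥ (t⁻¹ • s)) ⬝ᵥ (t⁻¹ • s) +
      (p - q) ⬝ᵥ ((2:ℝ) • (t⁻¹ • s) + (x - y))) =
      t^2 * ((A *ᵥ (t⁻¹ • s)) ⬝ᵥ (t⁻¹ • s)) +
      t^2 * ((p - q) ⬝ᵥ ((2:ℝ) • (t⁻¹ • s) + (x - y))) := by ring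
  rw [hdist] at hmul
  exact hmul

end Stmt19Aux

open Stmt19Aux in
theorem stmt19 (n : ℕ) (A B : Matrix (Fin n) (Fin n) ℝ)
    (hA : A.IsSymm) (hB : B.IsSymm) (hU : (B - A).PosDef)
    (f g : (Fin n → ℝ) → ℝ)
    (hf : ∀ x : Fin n → ℝ, ∃ l : Fin n → ℝ, ∀ y : Fin n → ℝ,
      f y - f x - l ⬝ᵥ (y - x) ≤ (1/2) * (B *ᵥ (y - x)) ⬝ᵥ (y - x))
    (hg : ∀ x : Fin n → ℝ, ∃ l : Fin n → ℝ, ∀ y : Fin n → ℝ,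
      (-g) y - (-g) x - l ⬝ᵥ (y - x) ≤ (1/2) * ((-A) *ᵥ (y - x)) ⬝ᵥ (y - x))
    (hfg : ∀ x, g x ≤ f x)
    (K : Set (Fin n → ℝ)) (hK : K = {x | ∀ y, f x - g x ≤ f y - g y})
    (I : Set ((Fin n → ℝ) × (Fin n → ℝ)))
    (hI : I = {p | p.1 ∈ K ∧ p.2 = gradVec f p.1}) :
    ∀ z ∈ I, paratingent I z ⊆ coneBetween A B := by
  intro z hz v hv
  obtain ⟨t, zs, ws, hmem, hzs, hws, hlim⟩ := hv
  -- two-sided bound at every point of K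
  have hts : ∀ x ∈ K, ∀ w,
      (1/2) * ((A *ᵥ w) ⬝ᵥ w) ≤ f (x + w) - f x - gradVec f x ⬝ᵥ w ∧
      f (x + w) - f x - gradVec f x ⬝ᵥ w ≤ (1/2) * ((B *ᵥ w) ⬝ᵥ w) := by
    intro x hx
    exact lemma1 A B hU.posSemidef f g hf hg x (by rw [hK] at hx; exact hx)
  -- componentwise limits
  have hD : Tendsto (fun m => t m • ((zs m).1 - (ws m).1)) atTop (𝓝 v.1) := by
    have := (continuous_fst.tendsto v).comp hlim
    simpa [Function.comp_def] using this
  have hE : Tendsto (fun m => t m • ((zs m).2 - (ws m).2)) atTop (𝓝 v.2) := by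
    have := (continuous_snd.tendsto v).comp hlim
    simpa [Function.comp_def] using this
  -- key limiting inequality
  have hstar : ∀ s : Fin n → ℝ,
      (A *ᵥ s) ⬝ᵥ s + v.2 ⬝ᵥ ((2:ℝ) • s + v.1) ≤
      (B *ᵥ (s + v.1)) ⬝ᵥ (s + v.1) := by
    intro s
    have hm : ∀ m, (A *ᵥ s) ⬝ᵥ s +
        (t m • ((zs m).2 - (ws m).2)) ⬝ᵥ ((2:ℝ) • s + t m • ((zs m).1 - (ws m).1)) ≤
        (B *ᵥ (s + t m • ((zs m).1 - (ws m).1))) ⬝ᵥ (s + t m • ((zs m).1 - (ws m).1)) := by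
      intro m
      obtain ⟨htm, hzm, hwm⟩ := hmem m
      rw [hI] at hzm hwm
      obtain ⟨hz1, hz2⟩ := hzm
      obtain ⟨hw1, hw2⟩ := hwm
      rw [hz2, hw2]
      exact lemma2t A B f (zs m).1 (ws m).1 _ _ (t m) (ne_of_gt htm)
        (hts _ hz1) (hts _ hw1) s
    exact le_of_tendsto_of_tendsto'
      (tendsto_const_nhds.add (dot_tendsto hE (Tendsto.const_add ((2:ℝ) • s) hD)))
      (dot_tendsto (mulVec_tendsto B (Tendsto.const_add s hD)) (Tendsto.const_add s hD))
      hm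
  -- the residual vector
  set r := B *ᵥ v.1 - v.2 with hrdef
  have hineq : ∀ s : Fin n → ℝ,
      2 * (r ⬝ᵥ s) ≤ ((B - A) *ᵥ s) ⬝ᵥ s + r ⬝ᵥ v.1 := by
    intro s
    have h1 := hstar (-s)
    have hsw := symm_swap hB s v.1
    simp only [hrdef, mulVec_neg, dotProduct_neg, neg_dotProduct, neg_neg, dotProduct_add,
      sub_dotProduct, dotProduct_smul, smul_eq_mul, dotProduct_sub, sub_mulVec,
      mulVec_add, add_dotProduct] at h1 ⊢
    linarith
  have hr0 : 0 ≤ r ⬝ᵥ v.1 := by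
    have := hineq 0
    simpa using this
  have hquad : ∀ w : Fin n → ℝ,
      (r ⬝ᵥ w)^2 ≤ (r ⬝ᵥ v.1) * (((B - A) *ᵥ w) ⬝ᵥ w) := by
    intro w
    by_cases hw : w = 0
    · subst hw; simp
    · have hQ : 0 < ((B - A) *ᵥ w) ⬝ᵥ w := by
        have := hU.dotProduct_mulVec_pos hw
        simpa [star_trivial, dotProduct_comm] using this
      have hQ' : ((B - A) *ᵥ w) ⬝ᵥ w ≠ 0 := ne_of_gt hQ
      have hk := hineq (((r ⬝ᵥ w) / (((B - A) *ᵥ w) ⬝ᵥ w)) • w)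
      rw [dotProduct_smul, quad_smul, smul_eq_mul] at hk
      have e1 : (r ⬝ᵥ w) / (((B - A) *ᵥ w) ⬝ᵥ w) * (r ⬝ᵥ w) =
          (r ⬝ᵥ w)^2 / (((B - A) *ᵥ w) ⬝ᵥ w) := by ring
      have e2 : ((r ⬝ᵥ w) / (((B - A) *ᵥ w) ⬝ᵥ w))^2 * (((B - A) *ᵥ w) ⬝ᵥ w) =
          (r ⬝ᵥ w)^2 / (((B - A) *ᵥ w) ⬝ᵥ w) := by
        field_simp
      rw [e1, e2] at hk
      have h3 : (r ⬝ᵥ w)^2 / (((B - A) *ᵥ w) ⬝ᵥ w) ≤ r ⬝ᵥ v.1 := by linarith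
      calc (r ⬝ᵥ w)^2 = ((r ⬝ᵥ w)^2 / (((B - A) *ᵥ w) ⬝ᵥ w)) * (((B - A) *ᵥ w) ⬝ᵥ w) := by
            field_simp
        _ ≤ (r ⬝ᵥ v.1) * (((B - A) *ᵥ w) ⬝ᵥ w) :=
            mul_le_mul_of_nonneg_right h3 (le_of_lt hQ)
  by_cases hc : r ⬝ᵥ v.1 = 0
  · -- r must vanish; take S = B
    have hr : r = 0 := by
      have h1 := hquad r
      rw [hc, zero_mul] at h1
      have h2 : (r ⬝ᵥ r)^2 = 0 := le_antisymm h1 (sq_nonneg _)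
      exact dotProduct_self_eq_zero.mp
        ((pow_eq_zero_iff (two_ne_zero (α := ℕ))).mp h2)
    refine ⟨B, hB, hU.posSemidef, ?_, ?_⟩
    · rw [sub_self]; exact Matrix.PosSemidef.zero
    · have := sub_eq_zero.mp hr
      exact this.symm
  · have hc' : 0 < r ⬝ᵥ v.1 := lt_of_le_of_ne hr0 (Ne.symm hc)
    set c := r ⬝ᵥ v.1 with hcd
    refine ⟨B - c⁻¹ • vecMulVec r r, ?_, ?_, ?_, ?_⟩
    · exact hB.sub ((vecMulVec_symm r).smul c⁻¹)
    · -- S - A = (B - A) - c⁻¹ • vecMulVec r r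
      have heq : B - c⁻¹ • vecMulVec r r - A = (B - A) - c⁻¹ • vecMulVec r r := by
        abel
      rw [heq]
      refine PosSemidef.of_dotProduct_mulVec_nonneg ?_ ?_
      · exact isHermitian_of_isSymm ((hB.sub hA).sub ((vecMulVec_symm r).smul c⁻¹))
      · intro x
        have hq := hquad x
        have hrw : star x ⬝ᵥ (((B - A) - c⁻¹ • vecMulVec r r) *ᵥ x) =
            ((B - A) *ᵥ x) ⬝ᵥ x - c⁻¹ * ((r ⬝ᵥ x) * (r ⬝ᵥ x)) := by
          rw [star_trivial, sub_mulVec, dotProduct_sub, smul_mulVec,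
            vecMulVec_mulVec', dotProduct_smul, dotProduct_smul, smul_eq_mul, smul_eq_mul,
            dotProduct_comm x r, dotProduct_comm x ((B - A) *ᵥ x)]
        rw [hrw]
        have hinv : 0 ≤ c⁻¹ := le_of_lt (inv_pos.mpr hc')
        have hcc : c * c⁻¹ = 1 := mul_inv_cancel₀ (ne_of_gt hc')
        nlinarith [hq, mul_le_mul_of_nonneg_left hq hinv]
    · -- B - S = c⁻¹ • vecMulVec r r
      have heq : B - (B - c⁻¹ • vecMulVec r r) = c⁻¹ • vecMulVec r r := sub_sub_cancel _ _
      rw [heq]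
      refine PosSemidef.of_dotProduct_mulVec_nonneg ?_ ?_
      · exact isHermitian_of_isSymm ((vecMulVec_symm r).smul c⁻¹)
      · intro x
        have hrw : star x ⬝ᵥ ((c⁻¹ • vecMulVec r r) *ᵥ x) = c⁻¹ * ((r ⬝ᵥ x) * (r ⬝ᵥ x)) := by
          rw [star_trivial, smul_mulVec, vecMulVec_mulVec', dotProduct_smul,
            dotProduct_smul, smul_eq_mul, smul_eq_mul, dotProduct_comm x r]
        rw [hrw]
        exact mul_nonneg (inv_nonneg.mpr (le_of_lt hc')) (mul_self_nonneg _)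
    · -- S *ᵥ v.1 = v.2
      rw [sub_mulVec, smul_mulVec, vecMulVec_mulVec', ← hcd, smul_smul,
        inv_mul_cancel₀ (ne_of_gt hc'), one_smul, hrdef, sub_sub_cancel]
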